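/- Assume μ_{k,0}(θ°) > 0 for every agent k, and let y be the Perron eigenvector of A (A y = y, 1ᵀ y = 1, y ≻ 0). Define the weighted aggregate risk J(μ_i) = ∑_{k=1}^N y(k) · E[ −log μ_{k,i}(θ°) ]. Then the sequence (J(μ_i))_{i≥0} is non-increasing: J(μ_i) ≤ J(μ_{i−1}) for every i ≥ 1; being also nonnegative, it converges. -/

import Mathlib

open MeasureTheory ProbabilityTheory Filter


private lemma aux_gibbs {Z : Type} [Fintype Z] (q p : Z → ℝ)
    (hq : ∀ z, 0 < q z) (hp : ∀ z, 0 < p z)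
    (hq1 : ∑ z, q z = 1) (hp1 : ∑ z, p z = 1) :
    ∑ z, q z * (Real.log (p z) - Real.log (q z)) ≤ 0 := by
  have h : ∀ z, q z * (Real.log (p z) - Real.log (q z)) ≤ p z - q z := by
    intro z
    have hd : 0 < p z / q z := div_pos (hp z) (hq z)
    have hlog := Real.log_le_sub_one_of_pos hd
    rw [← Real.log_div (hp z).ne' (hq z).ne']
    calc q z * Real.log (p z / q z) ≤ q z * (p z / q z - 1) :=
          mul_le_mul_of_nonneg_left hlog (hq z).le
      _ = p z - q z := by rw [mul_sub, mul_div_cancel₀ _ (hq z).ne', mul_one]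
  calc ∑ z, q z * (Real.log (p z) - Real.log (q z)) ≤ ∑ z, (p z - q z) :=
        Finset.sum_le_sum (fun z _ => h z)
    _ = 0 := by rw [Finset.sum_sub_distrib, hp1, hq1, sub_self]

private lemma aux_integrable {Ω : Type} [MeasurableSpace Ω] (P : Measure Ω) [IsFiniteMeasure P]
    {f : Ω → ℝ} (hf : Measurable f) (hfin : (Set.range f).Finite) :
    Integrable f P := by
  obtain ⟨C, hC⟩ := (hfin.image abs).bddAbove
  refine (integrable_const C).mono' hf.aestronglyMeasurable (ae_of_all _ fun ω => ?_)
  rw [Real.norm_eq_abs]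
  exact hC (Set.mem_image_of_mem _ (Set.mem_range_self ω))

private def sigVec {Ω : Type} {N : ℕ} {Z : Fin N → Type}
    (ξ : (k : Fin N) → ℕ → Ω → Z k) (n : ℕ) (ω : Ω) :
    (p : Fin N × Fin n) → Z p.1 := fun p => ξ p.1 p.2 ω

private lemma integrable_comp_sigVec {Ω : Type} [MeasurableSpace Ω] (P : Measure Ω)
    [IsFiniteMeasure P] {N : ℕ} {Z : Fin N → Type} [∀ k, Fintype (Z k)]
    [∀ k, MeasurableSpace (Z k)] [∀ k, MeasurableSingletonClass (Z k)]
    (ξ : (k : Fin N) → ℕ → Ω → Z k) (hmeas : ∀ k i, Measurable (ξ k i))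
    (n : ℕ) (g : ((p : Fin N × Fin n) → Z p.1) → ℝ) :
    Integrable (fun ω => g (sigVec ξ n ω)) P := by
  have hX : Measurable (sigVec ξ n) := measurable_pi_lambda _ (fun p => hmeas p.1 p.2)
  have hg : Measurable g := measurable_of_countable g
  refine aux_integrable P (hg.comp hX) ?_
  exact (Set.finite_range g).subset (by rintro x ⟨ω, rfl⟩; exact ⟨_, rfl⟩)

private lemma indep_sigVec {Ω : Type} [MeasurableSpace Ω] {P : Measure Ω}
    {N : ℕ} {Z : Fin N → Type} [∀ k, MeasurableSpace (Z k)]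
    (ξ : (k : Fin N) → ℕ → Ω → Z k) (hmeas : ∀ k i, Measurable (ξ k i))
    (hindep : iIndepFun
      (fun p : Fin N × ℕ => ξ p.1 p.2) P)
    (k : Fin N) (i : ℕ) :
    IndepFun (ξ k i) (sigVec ξ i) P := by
  classical
  set S : Finset (Fin N × ℕ) := {(k, i)} with hSdef
  set T : Finset (Fin N × ℕ) :=
    Finset.image (fun p : Fin N × Fin i => (p.1, (p.2 : ℕ))) Finset.univ with hTdef
  have hST : Disjoint S T := by
    rw [Finset.disjoint_left]
    rintro x hxS hxT
    rw [hSdef, Finset.mem_singleton] at hxS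
    rw [hTdef, Finset.mem_image] at hxT
    obtain ⟨p, -, hp⟩ := hxT
    subst hxS
    have : (p.2 : ℕ) = i := congrArg Prod.snd hp
    exact absurd this (Nat.ne_of_lt p.2.isLt)
  have h := hindep.indepFun_finset S T hST (fun p => hmeas p.1 p.2)
  have hkS : (k, i) ∈ S := by rw [hSdef]; exact Finset.mem_singleton_self _
  have hTmem : ∀ p : Fin N × Fin i, (p.1, (p.2 : ℕ)) ∈ T := by
    intro p; rw [hTdef]; exact Finset.mem_image_of_mem _ (Finset.mem_univ p)
  have h2 := h.comp
    (φ := fun v : (s : S) → Z (s : Fin N × ℕ).1 => v ⟨(k, i), hkS⟩)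
    (ψ := fun v : (t : T) → Z (t : Fin N × ℕ).1 =>
      (fun p : Fin N × Fin i => v ⟨(p.1, (p.2 : ℕ)), hTmem p⟩))
    (measurable_pi_apply (X := fun s : S => Z (s : Fin N × ℕ).1) (⟨(k, i), hkS⟩ : S))
    (measurable_pi_lambda _ (fun p => measurable_pi_apply _))
  exact h2


/-- Self-aware diffusion social learning over a strongly-connected network
with all priors positive at the true state `θ0`.  With `y` the Perron eigenvector of the
combination matrix (`Ay = y`, `1ᵀy = 1`, `y ≻ 0`), the weighted aggregate risk
`J(μ_i) = ∑_k y(k) E[−log μ_{k,i}(θ0)]` is non-increasing in `i`; being also nonnegative,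
it converges.  (Here `ξ k i` and `γ k i` refer to time `i+1` of the paper's indexing.) -/
theorem stmt_17
    {Ω : Type} [MeasurableSpace Ω] (P : Measure Ω) [IsProbabilityMeasure P]
    {N : ℕ}
    (a : Fin N → Fin N → ℝ)
    (ha0 : ∀ l k, 0 ≤ a l k)
    (ha1 : ∀ k, ∑ l, a l k = 1)
    (haprim : ∃ n : ℕ, ∀ l k, 0 < ((Matrix.of a) ^ n) l k)
    (y : Fin N → ℝ)
    (hy_eig : ∀ l, ∑ k, a l k * y k = y l)
    (hy_sum : ∑ k, y k = 1)
    (hy_pos : ∀ k, 0 < y k)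
    {Θ : Type} [Fintype Θ] (θ0 : Θ)
    (Z : Fin N → Type) [∀ k, Fintype (Z k)] [∀ k, MeasurableSpace (Z k)]
    [∀ k, MeasurableSingletonClass (Z k)]
    (L : (k : Fin N) → Θ → Z k → ℝ)
    (hLpos : ∀ k θ ζ, 0 < L k θ ζ)
    (hLsum : ∀ k θ, ∑ ζ, L k θ ζ = 1)
    (ξ : (k : Fin N) → ℕ → Ω → Z k)
    (hmeas : ∀ k i, Measurable (ξ k i))
    (hindep : iIndepFun
      (fun p : Fin N × ℕ => ξ p.1 p.2) P)
    (hlaw : ∀ (k : Fin N) (i : ℕ) (ζ : Z k),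
      P (ξ k i ⁻¹' {ζ}) = ENNReal.ofReal (L k θ0 ζ))
    (γ : Fin N → ℕ → ℝ)
    (hγ01 : ∀ k i, γ k i ∈ Set.Icc (0 : ℝ) 1)
    (μ0 : Fin N → Θ → ℝ)
    (hμ0nn : ∀ k θ, 0 ≤ μ0 k θ) (hμ0sum : ∀ k, ∑ θ, μ0 k θ = 1)
    (hμ0pos : ∀ k, 0 < μ0 k θ0)
    (μ ψ : ℕ → Fin N → Θ → Ω → ℝ)
    (hinit : ∀ k θ ω, μ 0 k θ ω = μ0 k θ)
    (hψ : ∀ (i : ℕ) (k : Fin N) (θ : Θ) (ω : Ω), ψ (i + 1) k θ ω =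
      (1 - γ k i) * μ i k θ ω +
        γ k i * (μ i k θ ω * L k θ (ξ k i ω) / ∑ θ' : Θ, μ i k θ' ω * L k θ' (ξ k i ω)))
    (hμ : ∀ (i : ℕ) (k : Fin N) (θ : Θ) (ω : Ω),
      μ (i + 1) k θ ω = ∑ l : Fin N, a l k * ψ (i + 1) l θ ω) :
    (∀ i : ℕ,
      ∑ k : Fin N, y k * ∫ ω, (-Real.log (μ (i + 1) k θ0 ω)) ∂P ≤
        ∑ k : Fin N, y k * ∫ ω, (-Real.log (μ i k θ0 ω)) ∂P) ∧
    (∀ i : ℕ, 0 ≤ ∑ k : Fin N, y k * ∫ ω, (-Real.log (μ i k θ0 ω)) ∂P) ∧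
    (∃ c : ℝ, Tendsto
      (fun i => ∑ k : Fin N, y k * ∫ ω, (-Real.log (μ i k θ0 ω)) ∂P)
      atTop (nhds c)) := by
  classical
  -- facts about ψ at time i+1 from facts about μ at time i
  have hψfacts : ∀ (i : ℕ) (l : Fin N) (ω : Ω),
      (∀ θ, 0 ≤ μ i l θ ω) → (∑ θ, μ i l θ ω = 1) → (0 < μ i l θ0 ω) →
      (0 < ∑ θ' : Θ, μ i l θ' ω * L l θ' (ξ l i ω)) ∧ (∀ θ, 0 ≤ ψ (i + 1) l θ ω) ∧
      (∑ θ, ψ (i + 1) l θ ω = 1) ∧ (0 < ψ (i + 1) l θ0 ω) := by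
    intro i l ω hnn hsum hpos
    have hγ0 := (hγ01 l i).1
    have hγ1 := (hγ01 l i).2
    have htermnn : ∀ θ, 0 ≤ μ i l θ ω * L l θ (ξ l i ω) :=
      fun θ => mul_nonneg (hnn θ) (hLpos l θ _).le
    have hs : 0 < ∑ θ' : Θ, μ i l θ' ω * L l θ' (ξ l i ω) :=
      lt_of_lt_of_le (mul_pos hpos (hLpos l θ0 _))
        (Finset.single_le_sum (fun θ _ => htermnn θ) (Finset.mem_univ θ0))
    refine ⟨hs, ?_, ?_, ?_⟩
    · intro θ
      rw [hψ]
      exact add_nonneg (mul_nonneg (by linarith) (hnn θ))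
        (mul_nonneg hγ0 (div_nonneg (htermnn θ) hs.le))
    · simp only [hψ]
      rw [Finset.sum_add_distrib, ← Finset.mul_sum, hsum, ← Finset.mul_sum,
        ← Finset.sum_div, div_self hs.ne']
      ring
    · rw [hψ]
      rcases eq_or_lt_of_le hγ1 with h1 | h1
      · have h0 : (1 : ℝ) - γ l i = 0 := by rw [← h1]; ring
        rw [h0, zero_mul, zero_add, h1, one_mul]
        exact div_pos (mul_pos hpos (hLpos l θ0 _)) hs
      · exact add_pos_of_pos_of_nonneg (mul_pos (by linarith) hpos)
          (mul_nonneg hγ0 (div_nonneg (htermnn θ0) hs.le))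
  -- main inductive invariant
  have key : ∀ i : ℕ, (∀ k θ ω, 0 ≤ μ i k θ ω) ∧ (∀ k ω, ∑ θ, μ i k θ ω = 1) ∧
      (∀ k ω, 0 < μ i k θ0 ω) ∧
      (∀ k θ, ∃ g : ((p : Fin N × Fin i) → Z p.1) → ℝ, ∀ ω, μ i k θ ω = g (sigVec ξ i ω)) := by
    intro i
    induction i with
    | zero =>
      exact ⟨fun k θ ω => by rw [hinit]; exact hμ0nn k θ,
        fun k ω => by simp only [hinit]; exact hμ0sum k,
        fun k ω => by rw [hinit]; exact hμ0pos k,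
        fun k θ => ⟨fun _ => μ0 k θ, fun ω => hinit k θ ω⟩⟩
    | succ i ih =>
      obtain ⟨hnn, hsum, hpos, hrep⟩ := ih
      have hfl : ∀ l ω, (0 < ∑ θ' : Θ, μ i l θ' ω * L l θ' (ξ l i ω)) ∧
          (∀ θ, 0 ≤ ψ (i + 1) l θ ω) ∧ (∑ θ, ψ (i + 1) l θ ω = 1) ∧ (0 < ψ (i + 1) l θ0 ω) :=
        fun l ω => hψfacts i l ω (fun θ => hnn l θ ω) (hsum l ω) (hpos l ω)
      choose G hG using hrep
      refine ⟨?_, ?_, ?_, ?_⟩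
      · intro k θ ω
        rw [hμ]
        exact Finset.sum_nonneg fun l _ => mul_nonneg (ha0 l k) ((hfl l ω).2.1 θ)
      · intro k ω
        simp only [hμ]
        rw [Finset.sum_comm]
        calc ∑ l, ∑ θ, a l k * ψ (i + 1) l θ ω
            = ∑ l, a l k * ∑ θ, ψ (i + 1) l θ ω := by
              exact Finset.sum_congr rfl fun l _ => (Finset.mul_sum _ _ _).symm
          _ = ∑ l, a l k := by
              exact Finset.sum_congr rfl fun l _ => by rw [(hfl l ω).2.2.1, mul_one]
          _ = 1 := ha1 k
      · intro k ω
        rw [hμ]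
        obtain ⟨l0, hl0⟩ : ∃ l0, 0 < a l0 k := by
          by_contra h
          push_neg at h
          have : ∑ l, a l k = 0 :=
            Finset.sum_eq_zero fun l _ => le_antisymm (h l) (ha0 l k)
          rw [ha1 k] at this; norm_num at this
        refine Finset.sum_pos' (fun l _ => mul_nonneg (ha0 l k) ((hfl l ω).2.1 θ0))
          ⟨l0, Finset.mem_univ l0, mul_pos hl0 (hfl l0 ω).2.2.2⟩
      · intro k θ
        refine ⟨fun w => ∑ l, a l k *
          ((1 - γ l i) * G l θ (fun p => w (p.1, p.2.castSucc)) +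
            γ l i * (G l θ (fun p => w (p.1, p.2.castSucc)) * L l θ (w (l, Fin.last i)) /
              ∑ θ' : Θ, G l θ' (fun p => w (p.1, p.2.castSucc)) * L l θ' (w (l, Fin.last i)))),
          fun ω => ?_⟩
        have hr : (fun p : Fin N × Fin i => sigVec ξ (i + 1) ω (p.1, p.2.castSucc))
            = sigVec ξ i ω := by
          funext p; simp [sigVec]
        have hlast : ∀ l : Fin N, sigVec ξ (i + 1) ω (l, Fin.last i) = ξ l i ω := fun l => rfl
        rw [hμ]
        refine Finset.sum_congr rfl fun l _ => ?_
        rw [hψ, hr, hlast]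
        simp only [← hG]
  -- integrability helpers
  have intRep : ∀ (n : ℕ) (f : Ω → ℝ),
      (∃ g : ((p : Fin N × Fin n) → Z p.1) → ℝ, ∀ ω, f ω = g (sigVec ξ n ω)) →
      Integrable f P := by
    rintro n f ⟨g, hg⟩
    exact (integrable_comp_sigVec P ξ hmeas n g).congr (ae_of_all _ fun ω => (hg ω).symm)
  have intMu : ∀ i k, Integrable (fun ω => -Real.log (μ i k θ0 ω)) P := by
    intro i k
    obtain ⟨g, hg⟩ := (key i).2.2.2 k θ0
    exact intRep i _ ⟨fun w => -Real.log (g w), fun ω => by rw [hg]⟩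
  have hlog_nonneg : ∀ i k ω, 0 ≤ -Real.log (μ i k θ0 ω) := by
    intro i k ω
    obtain ⟨hnn, hsum, hpos, -⟩ := key i
    have hle : μ i k θ0 ω ≤ 1 := by
      have h1 := Finset.single_le_sum (f := fun θ => μ i k θ ω)
        (fun θ _ => hnn k θ ω) (Finset.mem_univ θ0)
      rw [hsum k ω] at h1
      exact h1
    exact neg_nonneg.mpr (Real.log_nonpos (hpos k ω).le hle)
  have Jnonneg : ∀ i, 0 ≤ ∑ k, y k * ∫ ω, -Real.log (μ i k θ0 ω) ∂P :=
    fun i => Finset.sum_nonneg fun k _ => mul_nonneg (hy_pos k).le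
      (integral_nonneg fun ω => hlog_nonneg i k ω)
  -- the monotonicity step
  have step : ∀ i, ∑ k, y k * ∫ ω, -Real.log (μ (i + 1) k θ0 ω) ∂P ≤
      ∑ k, y k * ∫ ω, -Real.log (μ i k θ0 ω) ∂P := by
    intro i
    obtain ⟨hnn, hsum, hpos, hrep⟩ := key i
    choose G hG using hrep
    have hfl : ∀ l ω, (0 < ∑ θ' : Θ, μ i l θ' ω * L l θ' (ξ l i ω)) ∧
        (∀ θ, 0 ≤ ψ (i + 1) l θ ω) ∧ (∑ θ, ψ (i + 1) l θ ω = 1) ∧ (0 < ψ (i + 1) l θ0 ω) :=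
      fun l ω => hψfacts i l ω (fun θ => hnn l θ ω) (hsum l ω) (hpos l ω)
    have intPsi : ∀ l, Integrable (fun ω => -Real.log (ψ (i + 1) l θ0 ω)) P := by
      intro l
      refine intRep (i + 1) _ ⟨fun w => -Real.log (
        (1 - γ l i) * G l θ0 (fun p => w (p.1, p.2.castSucc)) +
        γ l i * (G l θ0 (fun p => w (p.1, p.2.castSucc)) * L l θ0 (w (l, Fin.last i)) /
          ∑ θ' : Θ, G l θ' (fun p => w (p.1, p.2.castSucc)) * L l θ' (w (l, Fin.last i)))),
        fun ω => ?_⟩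
      have hr : (fun p : Fin N × Fin i => sigVec ξ (i + 1) ω (p.1, p.2.castSucc))
          = sigVec ξ i ω := by
        funext p; simp [sigVec]
      have hlast : ∀ l' : Fin N, sigVec ξ (i + 1) ω (l', Fin.last i) = ξ l' i ω := fun _ => rfl
      beta_reduce
      rw [hψ, hr, hlast]
      simp only [← hG]
    -- Step 1: Jensen across the network
    have jensen1 : ∀ k, ∫ ω, -Real.log (μ (i + 1) k θ0 ω) ∂P ≤
        ∑ l, a l k * ∫ ω, -Real.log (ψ (i + 1) l θ0 ω) ∂P := by
      intro k
      have hpt : ∀ ω, -Real.log (μ (i + 1) k θ0 ω)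
          ≤ ∑ l, a l k * (-Real.log (ψ (i + 1) l θ0 ω)) := by
        intro ω
        have hj := (strictConcaveOn_log_Ioi.concaveOn).le_map_sum
          (t := Finset.univ) (w := fun l => a l k) (p := fun l => ψ (i + 1) l θ0 ω)
          (fun l _ => ha0 l k) (ha1 k) (fun l _ => (hfl l ω).2.2.2)
        simp only [smul_eq_mul] at hj
        rw [hμ]
        have hneg : ∑ l, a l k * (-Real.log (ψ (i + 1) l θ0 ω))
            = -∑ l, a l k * Real.log (ψ (i + 1) l θ0 ω) := by
          simp [mul_neg, ← Finset.sum_neg_distrib]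
        rw [hneg]
        exact neg_le_neg hj
      calc ∫ ω, -Real.log (μ (i + 1) k θ0 ω) ∂P
          ≤ ∫ ω, ∑ l, a l k * (-Real.log (ψ (i + 1) l θ0 ω)) ∂P :=
            integral_mono (intMu (i + 1) k)
              (integrable_finset_sum _ fun l _ => (intPsi l).const_mul _) hpt
        _ = ∑ l, a l k * ∫ ω, -Real.log (ψ (i + 1) l θ0 ω) ∂P := by
            rw [integral_finset_sum _ fun l _ => (intPsi l).const_mul _]
            exact Finset.sum_congr rfl fun l _ => integral_const_mul _ _
    -- Step 2: per-agent KL decrease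
    have step2 : ∀ l, ∫ ω, -Real.log (ψ (i + 1) l θ0 ω) ∂P
        ≤ ∫ ω, -Real.log (μ i l θ0 ω) ∂P := by
      intro l
      set D : Ω → ℝ := fun ω =>
        Real.log (∑ θ' : Θ, μ i l θ' ω * L l θ' (ξ l i ω))
          - Real.log (L l θ0 (ξ l i ω)) with hD_def
      set h : Z l → Ω → ℝ := fun ζ ω =>
        Real.log (∑ θ' : Θ, μ i l θ' ω * L l θ' ζ) - Real.log (L l θ0 ζ) with hh_def
      have hrepζ : ∀ ζ ω, h ζ ω =
          (fun w => Real.log (∑ θ' : Θ, G l θ' w * L l θ' ζ) - Real.log (L l θ0 ζ))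
            (sigVec ξ i ω) := by
        intro ζ ω; simp only [hh_def, ← hG]
      have int_h : ∀ ζ, Integrable (h ζ) P := fun ζ => intRep i _
        ⟨fun w => Real.log (∑ θ' : Θ, G l θ' w * L l θ' ζ) - Real.log (L l θ0 ζ), hrepζ ζ⟩
      have hInd : ∀ (u : Z l → ℝ) (v : ((p : Fin N × Fin i) → Z p.1) → ℝ),
          IndepFun (fun ω => u (ξ l i ω)) (fun ω => v (sigVec ξ i ω)) P :=
        fun u v => (indep_sigVec ξ hmeas hindep l i).comp
          (measurable_of_countable u) (measurable_of_countable v)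
      have intU : ∀ u : Z l → ℝ, Integrable (fun ω => u (ξ l i ω)) P := fun u =>
        aux_integrable P ((measurable_of_countable u).comp (hmeas l i))
          ((Set.finite_range u).subset (by rintro x ⟨ω, rfl⟩; exact ⟨_, rfl⟩))
      have hDdecomp : ∀ ω, D ω = ∑ ζ, (if ξ l i ω = ζ then (1:ℝ) else 0) * h ζ ω := by
        intro ω
        rw [Finset.sum_eq_single (ξ l i ω)]
        · simp [hh_def, hD_def]
        · intro b _ hb
          rw [if_neg (fun e => hb e.symm), zero_mul]
        · intro hmem; exact absurd (Finset.mem_univ _) hmem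
      have intTerm : ∀ ζ : Z l,
          Integrable (fun ω => (if ξ l i ω = ζ then (1:ℝ) else 0) * h ζ ω) P := by
        intro ζ
        have hfun : h ζ = fun ω =>
            (fun w => Real.log (∑ θ' : Θ, G l θ' w * L l θ' ζ) - Real.log (L l θ0 ζ))
              (sigVec ξ i ω) := funext (hrepζ ζ)
        rw [hfun]
        exact (hInd (fun z => if z = ζ then (1:ℝ) else 0)
            (fun w => Real.log (∑ θ' : Θ, G l θ' w * L l θ' ζ) - Real.log (L l θ0 ζ))).integrable_mul
          (intU (fun z => if z = ζ then (1:ℝ) else 0))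
          (integrable_comp_sigVec P ξ hmeas i
            (fun w => Real.log (∑ θ' : Θ, G l θ' w * L l θ' ζ) - Real.log (L l θ0 ζ)))
      have hmulint : ∀ ζ, ∫ ω, (if ξ l i ω = ζ then (1:ℝ) else 0) * h ζ ω ∂P
          = L l θ0 ζ * ∫ ω, h ζ ω ∂P := by
        intro ζ
        have hfun : h ζ = fun ω =>
            (fun w => Real.log (∑ θ' : Θ, G l θ' w * L l θ' ζ) - Real.log (L l θ0 ζ))
              (sigVec ξ i ω) := funext (hrepζ ζ)
        rw [hfun]
        have hmul := (hInd (fun z => if z = ζ then (1:ℝ) else 0)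
            (fun w => Real.log (∑ θ' : Θ, G l θ' w * L l θ' ζ) - Real.log (L l θ0 ζ))
          ).integral_fun_mul_eq_mul_integral (intU (fun z => if z = ζ then (1:ℝ) else 0)).aestronglyMeasurable
          (integrable_comp_sigVec P ξ hmeas i
            (fun w => Real.log (∑ θ' : Θ, G l θ' w * L l θ' ζ) - Real.log (L l θ0 ζ))).aestronglyMeasurable
        have hE1 : ∫ ω, (if ξ l i ω = ζ then (1:ℝ) else 0) ∂P = L l θ0 ζ := by
          have hset : (fun ω => (if ξ l i ω = ζ then (1:ℝ) else 0))
              = Set.indicator (ξ l i ⁻¹' {ζ}) (fun _ => (1:ℝ)) := by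
            funext ω; simp [Set.indicator_apply]
          rw [hset, integral_indicator_const (1:ℝ) ((hmeas l i) (measurableSet_singleton ζ)),
            measureReal_def, hlaw, ENNReal.toReal_ofReal (hLpos l θ0 ζ).le, smul_eq_mul, mul_one]
        rw [hE1] at hmul
        exact hmul
      have hDint_le : ∫ ω, D ω ∂P ≤ 0 := by
        have hDfun : D = fun ω => ∑ ζ, (if ξ l i ω = ζ then (1:ℝ) else 0) * h ζ ω :=
          funext hDdecomp
        rw [hDfun, integral_finset_sum _ (fun ζ _ => intTerm ζ)]
        have hgibbs : ∀ ω : Ω, ∑ ζ, L l θ0 ζ * h ζ ω ≤ 0 := by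
          intro ω
          have hppos : ∀ ζ : Z l, 0 < ∑ θ' : Θ, μ i l θ' ω * L l θ' ζ := fun ζ =>
            lt_of_lt_of_le (mul_pos (hpos l ω) (hLpos l θ0 ζ))
              (Finset.single_le_sum
                (fun θ _ => mul_nonneg (hnn l θ ω) (hLpos l θ ζ).le) (Finset.mem_univ θ0))
          have hpsum : ∑ ζ, ∑ θ' : Θ, μ i l θ' ω * L l θ' ζ = 1 := by
            rw [Finset.sum_comm]
            calc ∑ θ' : Θ, ∑ ζ, μ i l θ' ω * L l θ' ζ
                = ∑ θ' : Θ, μ i l θ' ω := Finset.sum_congr rfl fun θ' _ => by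
                  rw [← Finset.mul_sum, hLsum, mul_one]
              _ = 1 := hsum l ω
          simpa only [hh_def] using aux_gibbs (fun ζ => L l θ0 ζ)
            (fun ζ => ∑ θ' : Θ, μ i l θ' ω * L l θ' ζ)
            (fun ζ => hLpos l θ0 ζ) hppos (hLsum l θ0) hpsum
        calc ∑ ζ, ∫ ω, (if ξ l i ω = ζ then (1:ℝ) else 0) * h ζ ω ∂P
            = ∑ ζ, L l θ0 ζ * ∫ ω, h ζ ω ∂P :=
              Finset.sum_congr rfl fun ζ _ => hmulint ζ
          _ = ∫ ω, ∑ ζ, L l θ0 ζ * h ζ ω ∂P := by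
              rw [integral_finset_sum _ (fun ζ _ => (int_h ζ).const_mul _)]
              exact Finset.sum_congr rfl fun ζ _ => (integral_const_mul _ _).symm
          _ ≤ 0 := integral_nonpos hgibbs
      have intD : Integrable D P := by
        have hDfun : D = fun ω => ∑ ζ, (if ξ l i ω = ζ then (1:ℝ) else 0) * h ζ ω :=
          funext hDdecomp
        rw [hDfun]
        exact integrable_finset_sum _ (fun ζ _ => intTerm ζ)
      have hpt2 : ∀ ω, -Real.log (ψ (i + 1) l θ0 ω) ≤ -Real.log (μ i l θ0 ω) + γ l i * D ω := by
        intro ω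
        obtain ⟨hS, hψnn, hψs, hψp⟩ := hfl l ω
        have hγ0 := (hγ01 l i).1
        have hγ1 := (hγ01 l i).2
        have hx : μ i l θ0 ω ∈ Set.Ioi (0:ℝ) := hpos l ω
        have hz : μ i l θ0 ω * L l θ0 (ξ l i ω)
            / (∑ θ' : Θ, μ i l θ' ω * L l θ' (ξ l i ω)) ∈ Set.Ioi (0:ℝ) :=
          div_pos (mul_pos (hpos l ω) (hLpos l θ0 _)) hS
        have hcc := (strictConcaveOn_log_Ioi.concaveOn).2 hx hz
          (by linarith : (0:ℝ) ≤ 1 - γ l i) hγ0 (by ring)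
        simp only [smul_eq_mul] at hcc
        have hlog2 : Real.log (μ i l θ0 ω * L l θ0 (ξ l i ω)
              / (∑ θ' : Θ, μ i l θ' ω * L l θ' (ξ l i ω)))
            = Real.log (μ i l θ0 ω) + Real.log (L l θ0 (ξ l i ω))
              - Real.log (∑ θ' : Θ, μ i l θ' ω * L l θ' (ξ l i ω)) := by
          rw [Real.log_div (mul_pos (hpos l ω) (hLpos l θ0 _)).ne' hS.ne',
            Real.log_mul (hpos l ω).ne' (hLpos l θ0 _).ne']
        rw [hlog2] at hcc
        rw [hψ]
        simp only [hD_def]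
        nlinarith [hcc]
      calc ∫ ω, -Real.log (ψ (i + 1) l θ0 ω) ∂P
          ≤ ∫ ω, (-Real.log (μ i l θ0 ω) + γ l i * D ω) ∂P :=
            integral_mono (intPsi l) ((intMu i l).add (intD.const_mul _)) hpt2
        _ = (∫ ω, -Real.log (μ i l θ0 ω) ∂P) + γ l i * ∫ ω, D ω ∂P := by
            rw [integral_add (intMu i l) (intD.const_mul _), integral_const_mul]
        _ ≤ ∫ ω, -Real.log (μ i l θ0 ω) ∂P := by
            have hle0 : γ l i * ∫ ω, D ω ∂P ≤ 0 := by
              calc γ l i * ∫ ω, D ω ∂P ≤ γ l i * 0 :=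
                    mul_le_mul_of_nonneg_left hDint_le (hγ01 l i).1
                _ = 0 := mul_zero _
            linarith
    calc ∑ k, y k * ∫ ω, -Real.log (μ (i + 1) k θ0 ω) ∂P
        ≤ ∑ k, y k * ∑ l, a l k * ∫ ω, -Real.log (ψ (i + 1) l θ0 ω) ∂P :=
          Finset.sum_le_sum fun k _ => mul_le_mul_of_nonneg_left (jensen1 k) (hy_pos k).le
      _ = ∑ l, y l * ∫ ω, -Real.log (ψ (i + 1) l θ0 ω) ∂P := by
          simp only [Finset.mul_sum]
          rw [Finset.sum_comm]
          refine Finset.sum_congr rfl fun l _ => ?_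
          calc ∑ k, y k * (a l k * ∫ ω, -Real.log (ψ (i + 1) l θ0 ω) ∂P)
              = (∑ k, a l k * y k) * ∫ ω, -Real.log (ψ (i + 1) l θ0 ω) ∂P := by
                rw [Finset.sum_mul]
                exact Finset.sum_congr rfl fun k _ => by ring
            _ = y l * ∫ ω, -Real.log (ψ (i + 1) l θ0 ω) ∂P := by rw [hy_eig l]
      _ ≤ ∑ l, y l * ∫ ω, -Real.log (μ i l θ0 ω) ∂P :=
          Finset.sum_le_sum fun l _ => mul_le_mul_of_nonneg_left (step2 l) (hy_pos l).le
  refine ⟨step, Jnonneg, ?_⟩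
  have hant : Antitone (fun i => ∑ k, y k * ∫ ω, -Real.log (μ i k θ0 ω) ∂P) :=
    antitone_nat_of_succ_le step
  exact ⟨_, tendsto_atTop_ciInf hant ⟨0, by rintro x ⟨i, rfl⟩; exact Jnonneg i⟩⟩
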